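/- Let H be a finite dimensional quasi-Hopf algebra with distinguished grouplike element μ ∈ Alg(H,k). Then for every left cointegral λ on H and all h, h' ∈ H: λ(S⁻¹(h)h') = ∑ μ(h₁) λ(h'S(h₂)). -/

import Mathlib

set_option autoImplicit false

open TensorProduct

/-- A quasi-bialgebra in the sense of Drinfeld. The reassociator `Phi` lives in
`H ⊗ (H ⊗ H)`, and `(Δ ⊗ id)` is transported along the associator. -/
structure QuasiBialgebra (k H : Type*) [Field k] [Ring H] [Algebra k H] where
  comul : H →ₐ[k] H ⊗[k] H
  counit : H →ₐ[k] k
  Phi : H ⊗[k] (H ⊗[k] H)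
  PhiInv : H ⊗[k] (H ⊗[k] H)
  Phi_invertible : Phi * PhiInv = 1
  invertible_Phi : PhiInv * Phi = 1
  quasi_coassoc : ∀ h : H,
    (Algebra.TensorProduct.map (AlgHom.id k H) comul) (comul h) * Phi
      = Phi * (Algebra.TensorProduct.assoc k k k H H H)
          ((Algebra.TensorProduct.map comul (AlgHom.id k H)) (comul h))
  counit_right : ∀ h : H,
    (Algebra.TensorProduct.map (AlgHom.id k H) counit) (comul h) = h ⊗ₜ[k] 1
  counit_left : ∀ h : H,
    (Algebra.TensorProduct.map counit (AlgHom.id k H)) (comul h) = 1 ⊗ₜ[k] h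
  pentagon :
    (1 ⊗ₜ[k] Phi)
      * (Algebra.TensorProduct.map (AlgHom.id k H)
          ((Algebra.TensorProduct.assoc k k k H H H).toAlgHom.comp
            (Algebra.TensorProduct.map comul (AlgHom.id k H)))) Phi
      * (Algebra.TensorProduct.map (AlgHom.id k H)
            (Algebra.TensorProduct.assoc k k k H H H).toAlgHom)
          ((Algebra.TensorProduct.assoc k k k H (H ⊗[k] H) H) (Phi ⊗ₜ[k] 1))
    = (Algebra.TensorProduct.map (AlgHom.id k H)
        (Algebra.TensorProduct.map (AlgHom.id k H) comul)) Phi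
      * (Algebra.TensorProduct.assoc k k k H H (H ⊗[k] H))
          ((Algebra.TensorProduct.map comul (AlgHom.id k (H ⊗[k] H))) Phi)
  counit_mid_Phi :
    (Algebra.TensorProduct.map (AlgHom.id k H)
      (Algebra.TensorProduct.map counit (AlgHom.id k H))) Phi = 1

/-- A quasi-Hopf algebra: a quasi-bialgebra with an algebra anti-homomorphism `S`
and elements `alpha`, `beta` satisfying Drinfeld's antipode axioms.  Bijectivity
of `S` is *not* assumed. -/
structure QuasiHopfAlgebra (k H : Type*) [Field k] [Ring H] [Algebra k H] extends
    QuasiBialgebra k H where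
  S : H →ₗ[k] H
  alpha : H
  beta : H
  S_one : S 1 = 1
  S_mul : ∀ a b : H, S (a * b) = S b * S a
  antipode_left : ∀ h : H,
    (LinearMap.mul' k H)
      ((TensorProduct.map ((LinearMap.mulRight k alpha) ∘ₗ S) LinearMap.id) (comul h))
      = counit h • alpha
  antipode_right : ∀ h : H,
    (LinearMap.mul' k H)
      ((TensorProduct.map LinearMap.id ((LinearMap.mulLeft k beta) ∘ₗ S)) (comul h))
      = counit h • beta
  antipode_Phi :
    (LinearMap.mul' k H)
      ((TensorProduct.map LinearMap.id
        ((LinearMap.mul' k H) ∘ₗ (TensorProduct.map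
          ((LinearMap.mulRight k alpha) ∘ₗ ((LinearMap.mulLeft k beta) ∘ₗ S))
          LinearMap.id))) Phi) = 1
  antipode_PhiInv :
    (LinearMap.mul' k H)
      ((TensorProduct.map ((LinearMap.mulRight k alpha) ∘ₗ S)
        ((LinearMap.mul' k H) ∘ₗ (TensorProduct.map (LinearMap.mulRight k beta) S)))
        PhiInv) = 1

namespace QuasiHopfAlgebra

variable {k H : Type*} [Field k] [Ring H] [Algebra k H] (Q : QuasiHopfAlgebra k H)

/-- The space of left integrals in `H`. -/
def leftIntegrals : Submodule k H where
  carrier := {t | ∀ h : H, h * t = Q.counit h • t}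
  add_mem' := by intro a b ha hb h; rw [mul_add, ha h, hb h, smul_add]
  zero_mem' := by intro h; simp
  smul_mem' := by intro c x hx h; rw [mul_smul_comm, hx h, smul_comm]

/-- The space of right integrals in `H`. -/
def rightIntegrals : Submodule k H where
  carrier := {t | ∀ h : H, t * h = Q.counit h • t}
  add_mem' := by intro a b ha hb h; rw [add_mul, ha h, hb h, smul_add]
  zero_mem' := by intro h; simp
  smul_mem' := by intro c x hx h; rw [smul_mul_assoc, hx h, smul_comm]

/-- The element `p_R = ∑ x¹ ⊗ x² β S(x³)`. -/
noncomputable def pR : H ⊗[k] H :=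
  (TensorProduct.map LinearMap.id
    ((LinearMap.mul' k H) ∘ₗ (TensorProduct.map (LinearMap.mulRight k Q.beta) Q.S)))
    Q.PhiInv

/-- The element `∑ X¹ t₁ ⊗ S(X² t₂) α X³` built from a (left integral) `t`. -/
noncomputable def Tel (t : H) : H ⊗[k] H :=
  (TensorProduct.map LinearMap.id
    ((LinearMap.mul' k H) ∘ₗ
      (TensorProduct.map ((LinearMap.mulRight k Q.alpha) ∘ₗ Q.S) LinearMap.id)))
    (Q.Phi * (Algebra.TensorProduct.assoc k k k H H H) (Q.comul t ⊗ₜ[k] 1))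

end QuasiHopfAlgebra

namespace QuasiHopfAlgebra

variable {k H : Type*} [Field k] [Ring H] [Algebra k H] (Q : QuasiHopfAlgebra k H)

/-- The map `e ↦ ∑ X¹e₁ ⊗ β S(S(X²e₂) α X³)`. -/
noncomputable def Amap : H →ₗ[k] H ⊗[k] H :=
  (TensorProduct.map LinearMap.id
      ((LinearMap.mulLeft k Q.beta) ∘ₗ Q.S ∘ₗ (LinearMap.mul' k H) ∘ₗ
        (TensorProduct.map ((LinearMap.mulRight k Q.alpha) ∘ₗ Q.S) LinearMap.id))) ∘ₗ
    (LinearMap.mulLeft k Q.Phi) ∘ₗ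
    (Algebra.TensorProduct.assoc k k k H H H).toLinearMap ∘ₗ
    ((TensorProduct.mk k (H ⊗[k] H) H).flip 1) ∘ₗ
    Q.comul.toLinearMap

/-- The Panaite–Van Oystaeyen projection
`P(h) = ∑ᵢ ⟨eⁱ, β S(S(X²(eᵢ)₂) α X³) h⟩ X¹ (eᵢ)₁` onto the space of left
integrals, written via the coevaluation element `∑ᵢ eᵢ ⊗ eⁱ`. -/
noncomputable def P [FiniteDimensional k H] (h : H) : H :=
  (TensorProduct.rid k H)
    ((TensorProduct.map LinearMap.id
        ((contractRight k H) ∘ₗ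
          (TensorProduct.map (LinearMap.mulRight k h) LinearMap.id)))
      ((TensorProduct.assoc k H H (Module.Dual k H))
        ((TensorProduct.map Q.Amap LinearMap.id) (coevaluation k H 1))))

end QuasiHopfAlgebra

section CFAux

open TensorProduct

variable {k H : Type*} [Field k] [Ring H] [Algebra k H]

/-- `CFcol φ (x ⊗ y) = φ y • x`. -/
noncomputable def CFcol {N : Type*} [AddCommGroup N] [Module k N]
    (φ : N →ₗ[k] k) : H ⊗[k] N →ₗ[k] H :=
  (TensorProduct.rid k H).toLinearMap ∘ₗ TensorProduct.map LinearMap.id φ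

@[simp] lemma CFcol_tmul {N : Type*} [AddCommGroup N] [Module k N]
    (φ : N →ₗ[k] k) (x : H) (y : N) :
    CFcol φ (x ⊗ₜ[k] y) = φ y • x := by
  simp [CFcol]

lemma CFcol_zero {N : Type*} [AddCommGroup N] [Module k N] (u : H ⊗[k] N) :
    CFcol (0 : N →ₗ[k] k) u = 0 := by
  induction u using TensorProduct.induction_on with
  | zero => simp
  | tmul x y => simp
  | add u v hu hv => simp [map_add, hu, hv]

lemma CFcol_add {N : Type*} [AddCommGroup N] [Module k N]
    (φ ψ : N →ₗ[k] k) (u : H ⊗[k] N) :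
    CFcol (φ + ψ) u = CFcol φ u + CFcol ψ u := by
  induction u using TensorProduct.induction_on with
  | zero => simp
  | tmul x y => simp [add_smul]
  | add u v hu hv => simp only [map_add, hu, hv]; abel

lemma CFcol_smul {N : Type*} [AddCommGroup N] [Module k N]
    (c : k) (φ : N →ₗ[k] k) (u : H ⊗[k] N) :
    CFcol (c • φ) u = c • CFcol φ u := by
  induction u using TensorProduct.induction_on with
  | zero => simp
  | tmul x y => simp [smul_smul]
  | add u v hu hv => simp [map_add, hu, hv]

lemma CFcol_sum {N : Type*} [AddCommGroup N] [Module k N] {ι : Type*}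
    (s : Finset ι) (f : ι → (N →ₗ[k] k)) (u : H ⊗[k] N) :
    CFcol (∑ i ∈ s, f i) u = ∑ i ∈ s, CFcol (f i) u := by
  classical
  induction s using Finset.induction_on with
  | empty => simp [CFcol_zero]
  | insert a s' hx ih => simp [Finset.sum_insert hx, CFcol_add, ih]

lemma CFcol_map_id {N M : Type*} [AddCommGroup N] [Module k N]
    [AddCommGroup M] [Module k M]
    (φ : M →ₗ[k] k) (ψ : N →ₗ[k] M) (u : H ⊗[k] N) :
    CFcol φ (TensorProduct.map LinearMap.id ψ u) = CFcol (φ ∘ₗ ψ) u := by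
  induction u using TensorProduct.induction_on with
  | zero => simp
  | tmul x y => simp
  | add u v hu hv => simp [map_add, hu, hv]

lemma CFcol_mul_tmul (φ : Module.Dual k H) (u : H ⊗[k] H) (a t : H) :
    CFcol φ (u * (a ⊗ₜ[k] t)) = CFcol (φ ∘ₗ LinearMap.mulRight k t) u * a := by
  induction u using TensorProduct.induction_on with
  | zero => simp
  | tmul x y => simp [Algebra.TensorProduct.tmul_mul_tmul, smul_mul_assoc]
  | add u v hu hv => simp [add_mul, hu, hv]

variable [FiniteDimensional k H]

lemma CFcoord_comp (T : H →ₗ[k] H) (i : Module.Basis.ofVectorSpaceIndex k H) :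
    (Module.Basis.ofVectorSpace k H).coord i ∘ₗ T
      = ∑ j, (Module.Basis.ofVectorSpace k H).repr (T (Module.Basis.ofVectorSpace k H j)) i •
          (Module.Basis.ofVectorSpace k H).coord j := by
  set b := Module.Basis.ofVectorSpace k H
  apply LinearMap.ext; intro x
  have hx : T x = ∑ j, b.repr x j • T (b j) := by
    conv_lhs => rw [← b.sum_repr x]
    rw [map_sum]; simp [map_smul]
  simp only [LinearMap.comp_apply, LinearMap.sum_apply, LinearMap.smul_apply,
    Module.Basis.coord_apply, hx, map_sum, map_smul, Finsupp.coe_finset_sum,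
    Finset.sum_apply, Finsupp.coe_smul, Pi.smul_apply, smul_eq_mul]
  exact Finset.sum_congr rfl fun j _ => mul_comm _ _

lemma CFcyc (T C : H →ₗ[k] H) (B : H →ₗ[k] H ⊗[k] H) :
    ∑ i, CFcol ((Module.Basis.ofVectorSpace k H).coord i ∘ₗ C)
        (B (T (Module.Basis.ofVectorSpace k H i)))
      = ∑ i, CFcol ((Module.Basis.ofVectorSpace k H).coord i ∘ₗ (T ∘ₗ C))
          (B (Module.Basis.ofVectorSpace k H i)) := by
  set b := Module.Basis.ofVectorSpace k H
  have lhs : ∀ i, CFcol (b.coord i ∘ₗ C) (B (T (b i)))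
      = ∑ j, b.repr (T (b i)) j • CFcol (b.coord i ∘ₗ C) (B (b j)) := by
    intro i
    conv_lhs => rw [← b.sum_repr (T (b i))]
    rw [map_sum, map_sum]
    exact Finset.sum_congr rfl fun j _ => by rw [map_smul, map_smul]
  have rhs : ∀ i, CFcol (b.coord i ∘ₗ (T ∘ₗ C)) (B (b i))
      = ∑ j, b.repr (T (b j)) i • CFcol (b.coord j ∘ₗ C) (B (b i)) := by
    intro i
    have hsc : (∑ j, b.repr (T (b j)) i • b.coord j) ∘ₗ C
        = ∑ j, (b.repr (T (b j)) i • b.coord j) ∘ₗ C := by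
      apply LinearMap.ext; intro x
      simp [LinearMap.sum_apply]
    rw [← LinearMap.comp_assoc, CFcoord_comp T i, hsc]
    rw [CFcol_sum]
    exact Finset.sum_congr rfl fun j _ => by
      rw [LinearMap.smul_comp, CFcol_smul]
  simp only [lhs, rhs]
  rw [Finset.sum_comm]

end CFAux
namespace QuasiHopfAlgebra

open TensorProduct

variable {k H : Type*} [Field k] [Ring H] [Algebra k H] (Q : QuasiHopfAlgebra k H)

/-- `γ (x ⊗ y) = S x * α * y`. -/
noncomputable def CFgam : H ⊗[k] H →ₗ[k] H :=
  (LinearMap.mul' k H) ∘ₗ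
    (TensorProduct.map ((LinearMap.mulRight k Q.alpha) ∘ₗ Q.S) LinearMap.id)

/-- `κ' (x ⊗ y) = S (S x * α * y)`. -/
noncomputable def CFkap' : H ⊗[k] H →ₗ[k] H := Q.S ∘ₗ CFgam Q

/-- `κ (x ⊗ y) = β * S (S x * α * y)`. -/
noncomputable def CFkap : H ⊗[k] H →ₗ[k] H :=
  (LinearMap.mulLeft k Q.beta) ∘ₗ CFkap' Q

@[simp] lemma CFgam_tmul (x y : H) : CFgam Q (x ⊗ₜ[k] y) = Q.S x * Q.alpha * y := by
  simp [CFgam]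

@[simp] lemma CFkap'_tmul (x y : H) :
    CFkap' Q (x ⊗ₜ[k] y) = Q.S (Q.S x * Q.alpha * y) := by
  simp [CFkap']

@[simp] lemma CFkap_tmul (x y : H) :
    CFkap Q (x ⊗ₜ[k] y) = Q.beta * Q.S (Q.S x * Q.alpha * y) := by
  simp [CFkap, CFkap']

/-- The element `Φ · ((Δ e ⊗ 1) associated)`. -/
noncomputable def CFU (e : H) : H ⊗[k] (H ⊗[k] H) :=
  Q.Phi * (Algebra.TensorProduct.assoc k k k H H H) (Q.comul e ⊗ₜ[k] 1)

lemma CFAmap_apply (e : H) :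
    Q.Amap e = TensorProduct.map LinearMap.id (CFkap Q) (CFU Q e) := rfl

/-- The `β`-less companion of `Amap`. -/
noncomputable def CFAtil : H →ₗ[k] H ⊗[k] H :=
  (TensorProduct.map LinearMap.id (CFkap' Q)) ∘ₗ
    (LinearMap.mulLeft k Q.Phi) ∘ₗ
    (Algebra.TensorProduct.assoc k k k H H H).toLinearMap ∘ₗ
    ((TensorProduct.mk k (H ⊗[k] H) H).flip 1) ∘ₗ
    Q.comul.toLinearMap

lemma CFAtil_apply (e : H) :
    CFAtil Q e = TensorProduct.map LinearMap.id (CFkap' Q) (CFU Q e) := rfl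

lemma CFmap_kap (u : H ⊗[k] (H ⊗[k] H)) :
    TensorProduct.map LinearMap.id (CFkap Q) u
      = TensorProduct.map LinearMap.id (LinearMap.mulLeft k Q.beta)
          (TensorProduct.map LinearMap.id (CFkap' Q) u) := by
  rw [← LinearMap.comp_apply, ← TensorProduct.map_comp]
  rfl

lemma CFcol_Amap (φ : Module.Dual k H) (e : H) :
    CFcol φ (Q.Amap e) = CFcol (φ ∘ₗ LinearMap.mulLeft k Q.beta) (CFAtil Q e) := by
  rw [CFAmap_apply, CFmap_kap, CFcol_map_id, CFAtil_apply]

lemma CFkap_mul_tmul_one (z : H ⊗[k] H) (a : H) :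
    CFkap Q (z * (a ⊗ₜ[k] (1 : H))) = CFkap Q z * Q.S (Q.S a) := by
  induction z using TensorProduct.induction_on with
  | zero => simp
  | tmul x y =>
      simp only [Algebra.TensorProduct.tmul_mul_tmul, mul_one, CFkap_tmul]
      simp [Q.S_mul, mul_assoc]
  | add u v hu hv => simp [add_mul, hu, hv]

lemma CFkap_one_tmul (z : H ⊗[k] H) (t : H) :
    CFkap Q (z * ((1 : H) ⊗ₜ[k] t)) = Q.beta * Q.S t * CFkap' Q z := by
  induction z using TensorProduct.induction_on with
  | zero => simp
  | tmul x y =>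
      simp only [Algebra.TensorProduct.tmul_mul_tmul, mul_one, CFkap_tmul, CFkap'_tmul]
      simp [Q.S_mul, mul_assoc]
  | add u v hu hv => simp [add_mul, mul_add, hu, hv]

lemma CFmapkap_mul_w (V : H ⊗[k] (H ⊗[k] H)) (w : H ⊗[k] H) :
    TensorProduct.map LinearMap.id (CFkap Q)
        (V * (Algebra.TensorProduct.assoc k k k H H H) (w ⊗ₜ[k] (1 : H)))
      = TensorProduct.map LinearMap.id (CFkap Q) V *
          TensorProduct.map LinearMap.id (Q.S ∘ₗ Q.S) w := by
  induction w using TensorProduct.induction_on with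
  | zero => simp
  | tmul a c =>
      rw [Algebra.TensorProduct.assoc_tmul]
      induction V using TensorProduct.induction_on with
      | zero => simp
      | tmul u z =>
          simp [Algebra.TensorProduct.tmul_mul_tmul, CFkap_mul_tmul_one]
      | add u v hu hv => simp [add_mul, hu, hv]
  | add u v hu hv =>
      simp only [add_tmul, map_add, mul_add, hu, hv]

lemma CFmapkap_one_one (V : H ⊗[k] (H ⊗[k] H)) (t : H) :
    TensorProduct.map LinearMap.id (CFkap Q)
        (V * ((1 : H) ⊗ₜ[k] ((1 : H) ⊗ₜ[k] t)))
      = TensorProduct.map LinearMap.id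
          ((LinearMap.mulLeft k (Q.beta * Q.S t)) ∘ₗ CFkap' Q) V := by
  induction V using TensorProduct.induction_on with
  | zero => simp
  | tmul u z =>
      simp only [Algebra.TensorProduct.tmul_mul_tmul, mul_one, TensorProduct.map_tmul,
        LinearMap.id_coe, id_eq, LinearMap.comp_apply]
      rw [CFkap_one_tmul]
      simp [mul_assoc]
  | add u v hu hv => simp [add_mul, hu, hv]

variable [FiniteDimensional k H]

set_option synthInstance.maxHeartbeats 1000000 in
lemma CFP_term (h : H) (u : H ⊗[k] H) (f : Module.Dual k H) :
    (TensorProduct.rid k H)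
        ((TensorProduct.map LinearMap.id
            ((contractRight k H) ∘ₗ
              (TensorProduct.map (LinearMap.mulRight k h) LinearMap.id)))
          ((TensorProduct.assoc k H H (Module.Dual k H)) (u ⊗ₜ[k] f)))
      = CFcol (f ∘ₗ LinearMap.mulRight k h) u := by
  induction u using TensorProduct.induction_on with
  | zero => simp
  | tmul x y => simp [TensorProduct.assoc_tmul]
  | add u v hu hv => simp only [add_tmul, map_add, hu, hv, CFcol]

set_option synthInstance.maxHeartbeats 1000000 in
set_option maxHeartbeats 1000000 in
lemma CFP_apply (h : H) :
    Q.P h = ∑ i, CFcol ((Module.Basis.ofVectorSpace k H).coord i ∘ₗ LinearMap.mulRight k h)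
        (Q.Amap (Module.Basis.ofVectorSpace k H i)) := by
  rw [QuasiHopfAlgebra.P, coevaluation_apply_one]
  simp only [map_sum, TensorProduct.map_tmul, LinearMap.id_coe, id_eq]
  exact Finset.sum_congr rfl fun i _ => CFP_term h _ _

end QuasiHopfAlgebra
namespace QuasiHopfAlgebra

open TensorProduct

variable {k H : Type*} [Field k] [Ring H] [Algebra k H] (Q : QuasiHopfAlgebra k H)

lemma CFalgMap_eq {A B C D : Type*} [Semiring A] [Semiring B] [Semiring C]
    [Semiring D] [Algebra k A] [Algebra k B] [Algebra k C] [Algebra k D]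
    (f : A →ₐ[k] B) (g : C →ₐ[k] D) (u : A ⊗[k] C) :
    Algebra.TensorProduct.map f g u
      = TensorProduct.map f.toLinearMap g.toLinearMap u := by
  induction u using TensorProduct.induction_on with
  | zero => simp
  | tmul a c => simp
  | add u v hu hv => simp [map_add, hu, hv]

lemma CFmap_map {N M P : Type*} [AddCommGroup N] [Module k N] [AddCommGroup M]
    [Module k M] [AddCommGroup P] [Module k P]
    (ψ : M →ₗ[k] P) (χ : N →ₗ[k] M) (u : H ⊗[k] N) :
    TensorProduct.map LinearMap.id ψ (TensorProduct.map LinearMap.id χ u)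
      = TensorProduct.map LinearMap.id (ψ ∘ₗ χ) u := by
  rw [← LinearMap.comp_apply, ← TensorProduct.map_comp, LinearMap.id_comp]

lemma CFa3 (g : H) :
    TensorProduct.map LinearMap.id (CFgam Q)
        ((Algebra.TensorProduct.map (AlgHom.id k H) Q.comul) (Q.comul g))
      = g ⊗ₜ[k] Q.alpha := by
  have hγΔ : CFgam Q ∘ₗ Q.comul.toLinearMap
      = (LinearMap.toSpanSingleton k H Q.alpha) ∘ₗ Q.counit.toLinearMap := by
    apply LinearMap.ext; intro x
    simp only [LinearMap.comp_apply, CFgam, AlgHom.toLinearMap_apply,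
      LinearMap.toSpanSingleton_apply]
    exact Q.antipode_left x
  rw [CFalgMap_eq, AlgHom.toLinearMap_id, CFmap_map, hγΔ, ← CFmap_map]
  have hε : TensorProduct.map LinearMap.id Q.counit.toLinearMap (Q.comul g)
      = g ⊗ₜ[k] (1 : k) := by
    rw [← AlgHom.toLinearMap_id (R := k) (A := H), ← CFalgMap_eq]
    exact Q.counit_right g
  rw [hε]
  simp

/-- `δ m = φ (β S(S v · m · w))`. -/
noncomputable def CFdel (φ : Module.Dual k H) (v w : H) : H →ₗ[k] k :=
  φ ∘ₗ LinearMap.mulLeft k Q.beta ∘ₗ Q.S ∘ₗ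
    LinearMap.mulLeft k (Q.S v) ∘ₗ LinearMap.mulRight k w

@[simp] lemma CFdel_apply (φ : Module.Dual k H) (v w m : H) :
    CFdel Q φ v w m = φ (Q.beta * Q.S (Q.S v * (m * w))) := by
  simp [CFdel]

lemma CFa1 (φ : Module.Dual k H) (u v w : H) (d : H ⊗[k] (H ⊗[k] H)) :
    CFcol φ (TensorProduct.map LinearMap.id (CFkap Q) (d * (u ⊗ₜ[k] (v ⊗ₜ[k] w))))
      = (TensorProduct.rid k H)
          (TensorProduct.map (LinearMap.mulRight k u)
            (CFdel Q φ v w ∘ₗ CFgam Q) d) := by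
  induction d using TensorProduct.induction_on with
  | zero => simp
  | tmul a z =>
      induction z using TensorProduct.induction_on with
      | zero => simp [tmul_zero]
      | tmul x y =>
          simp only [Algebra.TensorProduct.tmul_mul_tmul, TensorProduct.map_tmul,
            LinearMap.id_coe, id_eq, CFcol_tmul, CFkap_tmul, LinearMap.comp_apply,
            CFgam_tmul, CFdel_apply, TensorProduct.rid_tmul,
            LinearMap.mulRight_apply]
          congr 2
          simp [Q.S_mul, mul_assoc]
      | add z z' h1 h2 => simp only [tmul_add, add_mul, map_add, h1, h2]
  | add d d' h1 h2 => simp only [add_mul, map_add, h1, h2]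

lemma CFa (g : H) (φ : Module.Dual k H) (V : H ⊗[k] (H ⊗[k] H)) :
    g * CFcol φ (TensorProduct.map LinearMap.id (CFkap Q) V)
      = CFcol φ (TensorProduct.map LinearMap.id (CFkap Q)
          (((Algebra.TensorProduct.map (AlgHom.id k H) Q.comul) (Q.comul g)) * V)) := by
  induction V using TensorProduct.induction_on with
  | zero => simp
  | tmul u z =>
      induction z using TensorProduct.induction_on with
      | zero => simp [tmul_zero]
      | tmul v w =>
          rw [CFa1]
          rw [show TensorProduct.map (LinearMap.mulRight k u) (CFdel Q φ v w ∘ₗ CFgam Q)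
              = TensorProduct.map (LinearMap.mulRight k u) (CFdel Q φ v w) ∘ₗ
                  TensorProduct.map LinearMap.id (CFgam Q) by
            rw [← TensorProduct.map_comp, LinearMap.comp_id]]
          rw [LinearMap.comp_apply, CFa3]
          simp [mul_smul_comm, mul_assoc]
      | add z z' h1 h2 => simp only [tmul_add, mul_add, map_add, h1, h2]
  | add V V' h1 h2 => simp only [mul_add, map_add, h1, h2]

/-- `ω (p ⊗ q) = p β S q`. -/
noncomputable def CFome : H ⊗[k] H →ₗ[k] H :=
  (LinearMap.mul' k H) ∘ₗ
    TensorProduct.map LinearMap.id ((LinearMap.mulLeft k Q.beta) ∘ₗ Q.S)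

@[simp] lemma CFome_tmul (p q : H) :
    CFome Q (p ⊗ₜ[k] q) = p * (Q.beta * Q.S q) := by
  simp [CFome]

variable [FiniteDimensional k H]

set_option synthInstance.maxHeartbeats 1000000 in
set_option maxHeartbeats 1000000 in
lemma CFNz (y : H) (z : H ⊗[k] H) :
    ∑ i, CFcol ((Module.Basis.ofVectorSpace k H).coord i ∘ₗ LinearMap.mulRight k y)
        (TensorProduct.map LinearMap.id (CFkap Q)
          (Q.Phi * (Algebra.TensorProduct.assoc k k k H H H)
            ((Algebra.TensorProduct.map Q.comul (AlgHom.id k H))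
              (z * ((Module.Basis.ofVectorSpace k H) i ⊗ₜ[k] (1 : H))))))
      = ∑ i, CFcol ((Module.Basis.ofVectorSpace k H).coord i ∘ₗ
            (LinearMap.mulRight k y ∘ₗ LinearMap.mulLeft k (CFome Q z)))
          (CFAtil Q ((Module.Basis.ofVectorSpace k H) i)) := by
  set b := Module.Basis.ofVectorSpace k H with hb
  induction z using TensorProduct.induction_on with
  | zero =>
      have hL : LinearMap.mulLeft k (CFome Q 0) = 0 := by
        rw [map_zero]; apply LinearMap.ext; intro m; simp
      simp [hL, CFcol_zero]
  | tmul p q =>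
      have step : ∀ i : Module.Basis.ofVectorSpaceIndex k H,
          CFcol (b.coord i ∘ₗ LinearMap.mulRight k y)
            (TensorProduct.map LinearMap.id (CFkap Q)
              (Q.Phi * (Algebra.TensorProduct.assoc k k k H H H)
                ((Algebra.TensorProduct.map Q.comul (AlgHom.id k H))
                  ((p ⊗ₜ[k] q) * (b i ⊗ₜ[k] (1 : H))))))
          = CFcol (b.coord i ∘ₗ (LinearMap.mulRight k y ∘ₗ
              LinearMap.mulLeft k (Q.beta * Q.S q)))
              (CFAtil Q ((LinearMap.mulLeft k p) (b i))) := by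
        intro i
        rw [Algebra.TensorProduct.tmul_mul_tmul, mul_one,
          Algebra.TensorProduct.map_tmul]
        rw [show ((Q.comul (p * b i)) ⊗ₜ[k] ((AlgHom.id k H) q)
            : (H ⊗[k] H) ⊗[k] H)
            = (Q.comul (p * b i) ⊗ₜ[k] (1:H)) * ((1 : H ⊗[k] H) ⊗ₜ[k] q) by
          rw [Algebra.TensorProduct.tmul_mul_tmul, mul_one, one_mul]; rfl]
        rw [map_mul (Algebra.TensorProduct.assoc k k k H H H), ← mul_assoc]
        rw [show (Algebra.TensorProduct.assoc k k k H H H) ((1 : H ⊗[k] H) ⊗ₜ[k] q)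
            = (1:H) ⊗ₜ[k] ((1:H) ⊗ₜ[k] q) by
          rw [Algebra.TensorProduct.one_def, Algebra.TensorProduct.assoc_tmul]]
        rw [show Q.Phi * (Algebra.TensorProduct.assoc k k k H H H)
              (Q.comul (p * b i) ⊗ₜ[k] (1:H)) = CFU Q (p * b i) from rfl]
        rw [CFmapkap_one_one, ← CFmap_map, ← CFAtil_apply, CFcol_map_id,
          LinearMap.comp_assoc, LinearMap.mulLeft_apply]
      rw [Finset.sum_congr rfl fun i _ => step i]
      rw [CFcyc (LinearMap.mulLeft k p)
        (LinearMap.mulRight k y ∘ₗ LinearMap.mulLeft k (Q.beta * Q.S q)) (CFAtil Q)]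
      refine Finset.sum_congr rfl fun i _ => ?_
      congr 2
      apply LinearMap.ext; intro m
      simp [mul_assoc, hb]
  | add z z' h1 h2 =>
      have hadd : ∀ i : Module.Basis.ofVectorSpaceIndex k H,
          CFcol (b.coord i ∘ₗ (LinearMap.mulRight k y ∘ₗ
              LinearMap.mulLeft k (CFome Q (z + z'))))
            (CFAtil Q (b i))
          = CFcol (b.coord i ∘ₗ (LinearMap.mulRight k y ∘ₗ
              LinearMap.mulLeft k (CFome Q z))) (CFAtil Q (b i))
            + CFcol (b.coord i ∘ₗ (LinearMap.mulRight k y ∘ₗ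
              LinearMap.mulLeft k (CFome Q z'))) (CFAtil Q (b i)) := by
        intro i
        have hf : b.coord i ∘ₗ (LinearMap.mulRight k y ∘ₗ
              LinearMap.mulLeft k (CFome Q (z + z')))
            = (b.coord i ∘ₗ (LinearMap.mulRight k y ∘ₗ
                LinearMap.mulLeft k (CFome Q z)))
              + (b.coord i ∘ₗ (LinearMap.mulRight k y ∘ₗ
                LinearMap.mulLeft k (CFome Q z'))) := by
          apply LinearMap.ext; intro m
          simp [map_add, add_mul]
        rw [hf, CFcol_add]
      have exp : ∀ i : Module.Basis.ofVectorSpaceIndex k H,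
          CFcol (b.coord i ∘ₗ LinearMap.mulRight k y)
            (TensorProduct.map LinearMap.id (CFkap Q)
              (Q.Phi * (Algebra.TensorProduct.assoc k k k H H H)
                ((Algebra.TensorProduct.map Q.comul (AlgHom.id k H))
                  ((z + z') * (b i ⊗ₜ[k] (1 : H))))))
          = CFcol (b.coord i ∘ₗ LinearMap.mulRight k y)
              (TensorProduct.map LinearMap.id (CFkap Q)
                (Q.Phi * (Algebra.TensorProduct.assoc k k k H H H)
                  ((Algebra.TensorProduct.map Q.comul (AlgHom.id k H))
                    (z * (b i ⊗ₜ[k] (1 : H))))))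
            + CFcol (b.coord i ∘ₗ LinearMap.mulRight k y)
              (TensorProduct.map LinearMap.id (CFkap Q)
                (Q.Phi * (Algebra.TensorProduct.assoc k k k H H H)
                  ((Algebra.TensorProduct.map Q.comul (AlgHom.id k H))
                    (z' * (b i ⊗ₜ[k] (1 : H)))))) := by
        intro i
        rw [add_mul, map_add, map_add, mul_add, map_add, map_add]
      rw [Finset.sum_congr rfl fun i _ => exp i, Finset.sum_add_distrib, h1, h2,
        ← Finset.sum_add_distrib]
      exact Finset.sum_congr rfl fun i _ => (hadd i).symm

end QuasiHopfAlgebra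
namespace QuasiHopfAlgebra

open TensorProduct

variable {k H : Type*} [Field k] [Ring H] [Algebra k H] (Q : QuasiHopfAlgebra k H)

lemma CFome_comul (g : H) : CFome Q (Q.comul g) = Q.counit g • Q.beta := by
  simp only [CFome, LinearMap.comp_apply]
  exact Q.antipode_right g

lemma CFAmap_mul (e y : H) :
    Q.Amap (e * y)
      = Q.Amap e * TensorProduct.map LinearMap.id (Q.S ∘ₗ Q.S) (Q.comul y) := by
  rw [CFAmap_apply, CFAmap_apply, ← CFmapkap_mul_w]
  congr 1
  rw [CFU, CFU, map_mul]
  rw [show ((Q.comul e * Q.comul y) ⊗ₜ[k] (1:H) : (H ⊗[k] H) ⊗[k] H)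
      = (Q.comul e ⊗ₜ[k] (1:H)) * (Q.comul y ⊗ₜ[k] (1:H)) by
    rw [Algebra.TensorProduct.tmul_mul_tmul, mul_one]]
  rw [map_mul (Algebra.TensorProduct.assoc k k k H H H), mul_assoc]

variable [FiniteDimensional k H]

set_option synthInstance.maxHeartbeats 1000000 in
set_option maxHeartbeats 1000000 in
lemma CFP_integral (g y : H) : g * Q.P y = Q.counit g • Q.P y := by
  set b := Module.Basis.ofVectorSpace k H with hb
  rw [CFP_apply, Finset.mul_sum]
  have key : ∀ e : H,
      (Algebra.TensorProduct.map (AlgHom.id k H) Q.comul) (Q.comul g) * CFU Q e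
        = Q.Phi * (Algebra.TensorProduct.assoc k k k H H H)
            ((Algebra.TensorProduct.map Q.comul (AlgHom.id k H))
              (Q.comul g * (e ⊗ₜ[k] (1:H)))) := by
    intro e
    rw [CFU, ← mul_assoc, Q.quasi_coassoc g, mul_assoc,
      ← map_mul (Algebra.TensorProduct.assoc k k k H H H)]
    congr 2
    rw [map_mul, Algebra.TensorProduct.map_tmul, map_one]
  have step1 : ∀ i : Module.Basis.ofVectorSpaceIndex k H,
      g * CFcol (b.coord i ∘ₗ LinearMap.mulRight k y) (Q.Amap (b i))
        = CFcol (b.coord i ∘ₗ LinearMap.mulRight k y)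
            (TensorProduct.map LinearMap.id (CFkap Q)
              (Q.Phi * (Algebra.TensorProduct.assoc k k k H H H)
                ((Algebra.TensorProduct.map Q.comul (AlgHom.id k H))
                  (Q.comul g * (b i ⊗ₜ[k] (1:H)))))) := by
    intro i
    rw [CFAmap_apply, CFa, key]
  rw [Finset.sum_congr rfl fun i _ => step1 i, CFNz, CFome_comul]
  have step2 : ∀ i : Module.Basis.ofVectorSpaceIndex k H,
      CFcol (b.coord i ∘ₗ (LinearMap.mulRight k y ∘ₗ
          LinearMap.mulLeft k (Q.counit g • Q.beta))) (CFAtil Q (b i))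
        = Q.counit g • CFcol (b.coord i ∘ₗ LinearMap.mulRight k y) (Q.Amap (b i)) := by
    intro i
    have hf : b.coord i ∘ₗ (LinearMap.mulRight k y ∘ₗ
          LinearMap.mulLeft k (Q.counit g • Q.beta))
        = Q.counit g • ((b.coord i ∘ₗ LinearMap.mulRight k y) ∘ₗ
            LinearMap.mulLeft k Q.beta) := by
      apply LinearMap.ext; intro m
      simp [smul_mul_assoc]
    rw [hf, CFcol_smul, ← CFcol_Amap]
  rw [Finset.sum_congr rfl fun i _ => step2 i, ← Finset.smul_sum, ← CFP_apply]

lemma CFP_mem (x : H) : Q.P x ∈ Q.leftIntegrals :=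
  fun g => CFP_integral Q g x

set_option synthInstance.maxHeartbeats 1000000 in
set_option maxHeartbeats 1000000 in
lemma CFP_mul (g y : H) :
    Q.P (g * y) = ∑ i, CFcol ((Module.Basis.ofVectorSpace k H).coord i ∘ₗ
        LinearMap.mulRight k g)
        (Q.Amap ((Module.Basis.ofVectorSpace k H) i) *
          TensorProduct.map LinearMap.id (Q.S ∘ₗ Q.S) (Q.comul y)) := by
  set b := Module.Basis.ofVectorSpace k H with hb
  rw [CFP_apply]
  have h1 : ∀ i : Module.Basis.ofVectorSpaceIndex k H,
      b.coord i ∘ₗ LinearMap.mulRight k (g * y)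
        = b.coord i ∘ₗ (LinearMap.mulRight k y ∘ₗ LinearMap.mulRight k g) := by
    intro i; congr 1; apply LinearMap.ext; intro m; simp [mul_assoc]
  rw [Finset.sum_congr rfl fun i _ => by rw [h1 i], ← CFcyc]
  refine Finset.sum_congr rfl fun i _ => ?_
  rw [LinearMap.mulRight_apply, CFAmap_mul]

end QuasiHopfAlgebra
/-- for a left cointegral `λ` (characterized by
`⟨λ, h⟩ = ⟨λ, S⁻¹(P(S h))⟩`), one has `λ(S⁻¹(h) h') = ∑ μ(h₁) λ(h' S(h₂))`. -/
theorem cointegral_Sinv_formula {k H : Type*} [Field k] [Ring H] [Algebra k H]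
    [FiniteDimensional k H] (Q : QuasiHopfAlgebra k H)
    (Sinv : H →ₗ[k] H) (hS1 : ∀ a, Sinv (Q.S a) = a) (hS2 : ∀ a, Q.S (Sinv a) = a)
    (μ : H →ₐ[k] k) (hμ : ∀ t ∈ Q.leftIntegrals, ∀ h : H, t * h = μ h • t)
    (lam : Module.Dual k H) (hlam : ∀ h : H, lam h = lam (Sinv (Q.P (Q.S h)))) :
    ∀ h h' : H,
      lam (Sinv h * h') =
        (LinearMap.mul' k k)
          ((TensorProduct.map μ.toLinearMap
            (lam ∘ₗ (LinearMap.mulLeft k h') ∘ₗ Q.S)) (Q.comul h)) := by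
  intro h h'
  have step1 : lam (Sinv h * h') = lam (Sinv (Q.P (Q.S h' * h))) := by
    rw [hlam (Sinv h * h'), Q.S_mul, hS2]
  rw [step1, Q.CFP_mul (Q.S h') h]
  generalize Q.comul h = w
  induction w using TensorProduct.induction_on with
  | zero => simp [CFcol_zero]
  | tmul a c =>
      have hterm : ∀ i : Module.Basis.ofVectorSpaceIndex k H,
          CFcol ((Module.Basis.ofVectorSpace k H).coord i ∘ₗ LinearMap.mulRight k (Q.S h'))
              (Q.Amap ((Module.Basis.ofVectorSpace k H) i) *
                TensorProduct.map LinearMap.id (Q.S ∘ₗ Q.S) (a ⊗ₜ[k] c))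
            = CFcol ((Module.Basis.ofVectorSpace k H).coord i ∘ₗ
                LinearMap.mulRight k (Q.S (Q.S c) * Q.S h'))
                (Q.Amap ((Module.Basis.ofVectorSpace k H) i)) * a := by
        intro i
        rw [TensorProduct.map_tmul]
        simp only [LinearMap.id_coe, id_eq, LinearMap.comp_apply]
        rw [CFcol_mul_tmul]
        congr 2
        rw [LinearMap.mulRight_mul, LinearMap.comp_assoc]
      rw [Finset.sum_congr rfl fun i _ => hterm i, ← Finset.sum_mul,
        ← Q.CFP_apply, hμ _ (Q.CFP_mem _) a, map_smul, map_smul]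
      have harg : Q.S (Q.S c) * Q.S h' = Q.S (h' * Q.S c) := (Q.S_mul h' (Q.S c)).symm
      rw [harg, ← hlam (h' * Q.S c)]
      simp [LinearMap.mul'_apply, smul_eq_mul]
  | add u v hu hv =>
      have e1 : ∀ i : Module.Basis.ofVectorSpaceIndex k H,
          CFcol ((Module.Basis.ofVectorSpace k H).coord i ∘ₗ LinearMap.mulRight k (Q.S h'))
              (Q.Amap ((Module.Basis.ofVectorSpace k H) i) *
                TensorProduct.map LinearMap.id (Q.S ∘ₗ Q.S) (u + v))
            = CFcol ((Module.Basis.ofVectorSpace k H).coord i ∘ₗ LinearMap.mulRight k (Q.S h'))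
                (Q.Amap ((Module.Basis.ofVectorSpace k H) i) *
                  TensorProduct.map LinearMap.id (Q.S ∘ₗ Q.S) u)
              + CFcol ((Module.Basis.ofVectorSpace k H).coord i ∘ₗ LinearMap.mulRight k (Q.S h'))
                (Q.Amap ((Module.Basis.ofVectorSpace k H) i) *
                  TensorProduct.map LinearMap.id (Q.S ∘ₗ Q.S) v) := by
        intro i
        rw [map_add, mul_add, map_add]
      rw [Finset.sum_congr rfl fun i _ => e1 i, Finset.sum_add_distrib, map_add,
        map_add, hu, hv, map_add, map_add]
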